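/- For all integers k and k′, the loop operators on the evaluation representation satisfy X⁻(k+1) X⁻(k′) − (r^{−1} s) X⁻(k′) X⁻(k+1) = −( X⁻(k′+1) X⁻(k) − (r^{−1} s) X⁻(k) X⁻(k′+1) ) as operators on V = ℂ^{n+1}. (This is relation (D6) of the Drinfeld realization of U_{r,s}(ŝl₂) for the negative loop generators, verified on the evaluation representation V_n(a).) -/

import Mathlib

/-- The two-parameter quantum integer `[m] = (r^m - s^m)/(r - s)`. -/
noncomputable def qint (r s : ℂ) (m : ℕ) : ℂ := (r ^ m - s ^ m) / (r - s)

/-- The loop operator `X⁻(k)` on `V = ℂ^{n+1}`,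
`X⁻(k) v_i = a^k r^{nk} (r s⁻¹)^{−k(i+1)} [i+1] v_{i+1}` (with `v_{n+1} = 0`). -/
noncomputable def Xm (n : ℕ) (r s a : ℂ) (k : ℤ) : Matrix (Fin (n + 1)) (Fin (n + 1)) ℂ :=
  Matrix.of fun j i =>
    if (j : ℕ) = (i : ℕ) + 1 then
      a ^ k * r ^ ((n : ℤ) * k) * (r * s⁻¹) ^ (-(k * ((i : ℤ) + 1))) * qint r s ((i : ℕ) + 1)
    else 0

lemma Xm_mul_apply (n : ℕ) (r s a : ℂ) (k1 k2 : ℤ) (j i : Fin (n + 1)) :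
    (Xm n r s a k1 * Xm n r s a k2) j i =
      if (j : ℕ) = (i : ℕ) + 2 then
        (a ^ k1 * r ^ ((n : ℤ) * k1) * (r * s⁻¹) ^ (-(k1 * ((i : ℤ) + 2))) * qint r s ((i : ℕ) + 2)) *
        (a ^ k2 * r ^ ((n : ℤ) * k2) * (r * s⁻¹) ^ (-(k2 * ((i : ℤ) + 1))) * qint r s ((i : ℕ) + 1))
      else 0 := by
  rw [Matrix.mul_apply]
  by_cases hi : (i : ℕ) + 1 < n + 1
  · rw [Finset.sum_eq_single (⟨(i : ℕ) + 1, hi⟩ : Fin (n + 1))]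
    · simp only [Xm, Matrix.of_apply]
      by_cases hj : (j : ℕ) = (i : ℕ) + 2
      · simp only [hj, Fin.val_mk, Nat.reduceAdd, if_true, reduceIte]
        push_cast
        rw [show ((i : ℤ) + 1 + 1) = (i : ℤ) + 2 by ring]
      · simp [hj]
    · intro b _ hb
      simp only [Xm, Matrix.of_apply]
      have : ¬ ((b : ℕ) = (i : ℕ) + 1) := by
        intro h
        exact hb (Fin.ext h)
      simp [this]
    · intro h; exact absurd (Finset.mem_univ _) h
  · have hin : (i : ℕ) = n := by omega
    have hj : ¬ ((j : ℕ) = (i : ℕ) + 2) := by omega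
    simp only [hj, if_false]
    apply Finset.sum_eq_zero
    intro b _
    simp only [Xm, Matrix.of_apply]
    have : ¬ ((b : ℕ) = (i : ℕ) + 1) := by omega
    simp [this]

lemma combine (a r t q1 q2 : ℂ) (ha : a ≠ 0) (hr : r ≠ 0) (ht : t ≠ 0)
    (k1 k2 m1 m2 e1 e2 : ℤ) :
    (a ^ k1 * r ^ m1 * t ^ e1 * q1) * (a ^ k2 * r ^ m2 * t ^ e2 * q2)
      = a ^ (k1 + k2) * r ^ (m1 + m2) * t ^ (e1 + e2) * (q1 * q2) := by
  rw [zpow_add₀ ha, zpow_add₀ hr, zpow_add₀ ht]; ring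

/-- Relation (D6) of the Drinfeld realization of `U_{r,s}(ŝl₂)` for the negative loop
generators, on the evaluation representation `V_n(a)`: for all integers `k, k′`,
`X⁻(k+1)X⁻(k′) − (r⁻¹s)X⁻(k′)X⁻(k+1) = −(X⁻(k′+1)X⁻(k) − (r⁻¹s)X⁻(k)X⁻(k′+1))`. -/
theorem D6_negative_on_evaluation (n : ℕ) (r s a : ℂ) (hr : r ≠ 0) (hs : s ≠ 0) (ha : a ≠ 0)
    (hrs : r ≠ s) (k k' : ℤ) :
    Xm n r s a (k + 1) * Xm n r s a k' - (r⁻¹ * s) • (Xm n r s a k' * Xm n r s a (k + 1))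
      = -(Xm n r s a (k' + 1) * Xm n r s a k
          - (r⁻¹ * s) • (Xm n r s a k * Xm n r s a (k' + 1))) := by
  have ht : r * s⁻¹ ≠ 0 := mul_ne_zero hr (inv_ne_zero hs)
  have hts : r⁻¹ * s = (r * s⁻¹) ^ (-1 : ℤ) := by
    rw [zpow_neg_one, mul_inv, inv_inv, mul_comm]
  ext j i
  simp only [Matrix.sub_apply, Matrix.neg_apply, Matrix.smul_apply, Xm_mul_apply, smul_eq_mul]
  by_cases hj : (j : ℕ) = (i : ℕ) + 2
  · simp only [hj, if_true, reduceIte, if_pos rfl]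
    set I : ℤ := (i : ℤ)
    set t : ℂ := r * s⁻¹
    set q1 : ℂ := qint r s ((i : ℕ) + 2)
    set q2 : ℂ := qint r s ((i : ℕ) + 1)
    rw [hts]
    rw [combine a r t q1 q2 ha hr ht, combine a r t q1 q2 ha hr ht,
        combine a r t q1 q2 ha hr ht, combine a r t q1 q2 ha hr ht]
    rw [show (k' + (k + 1) : ℤ) = (k + 1 + k') by ring,
        show ((n : ℤ) * k' + (n : ℤ) * (k + 1)) = ((n : ℤ) * (k + 1) + (n : ℤ) * k') by ring,
        show (k + (k' + 1) : ℤ) = (k' + 1 + k) by ring,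
        show ((n : ℤ) * k + (n : ℤ) * (k' + 1)) = ((n : ℤ) * (k' + 1) + (n : ℤ) * k) by ring,
        show (k' + 1 + k : ℤ) = (k + 1 + k') by ring,
        show ((n : ℤ) * (k' + 1) + (n : ℤ) * k) = ((n : ℤ) * (k + 1) + (n : ℤ) * k') by ring]
    have h1 : (-(k * (I + 2)) + -((k' + 1) * (I + 1)) : ℤ)
        = (-((k + 1) * (I + 2)) + -(k' * (I + 1))) + 1 := by ring
    have h2 : (-(k' * (I + 2)) + -((k + 1) * (I + 1)) : ℤ)
        = (-((k' + 1) * (I + 2)) + -(k * (I + 1))) + 1 := by ring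
    have hc : ∀ E : ℤ, t ^ (-1 : ℤ) *
        (a ^ (k + 1 + k') * r ^ ((n : ℤ) * (k + 1) + (n : ℤ) * k') * t ^ (E + 1) * (q1 * q2))
        = a ^ (k + 1 + k') * r ^ ((n : ℤ) * (k + 1) + (n : ℤ) * k') * t ^ E * (q1 * q2) := by
      intro E
      rw [zpow_add₀ ht E 1, zpow_one, zpow_neg_one]
      field_simp
    rw [h1, h2, hc, hc]
    ring
  · simp [hj]
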